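/- Let S = μ + Θγ + √Θ σ Z be a univariate NMVM random variable (Z standard normal independent of Θ > 0 with density π), and suppose c* = E[Θ] < ∞ so that π*(θ) = θπ(θ)/c* is a density. Let S* be the NMVM random variable with the same parameters but mixing density π*, and set α* = 1 − F̄_{S*}(s_α). Then for k ∈ ℕ: E[S^k | S > s_α] = μ E[S^{k−1} | S > s_α] + c*(1−α*)/(1−α) · [σ² s_α^{k−1} h_{S*}(s_α) + γ E[(S*)^{k−1} | S* > s_α] + (k−1)σ² E[(S*)^{k−2} | S* > s_α]], where h_{S*} = f_{S*}/F̄_{S*} is the hazard function. -/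

import Mathlib

open MeasureTheory Set Real Filter

set_option maxHeartbeats 1000000

/-- Density of the normal distribution with mean `m` and variance `v`. -/
noncomputable def ndens (m v x : ℝ) : ℝ :=
  (Real.sqrt (2 * Real.pi * v))⁻¹ * Real.exp (-(x - m) ^ 2 / (2 * v))

/-- Density of the univariate NMVM distribution with parameters `μ, γ, σ` and
mixing density `q` on `(0, ∞)`. -/
noncomputable def mixdens (μ γ σ : ℝ) (q : ℝ → ℝ) (s : ℝ) : ℝ :=
  ∫ θ in Set.Ioi (0:ℝ), ndens (μ + θ * γ) (θ * σ ^ 2) s * q θ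

/-- Survival function of the univariate NMVM distribution. -/
noncomputable def surv (μ γ σ : ℝ) (q : ℝ → ℝ) (c : ℝ) : ℝ :=
  ∫ s in Set.Ioi c, mixdens μ γ σ q s

/-- `k`-th tail moment `E[S^k | S > c]` of the univariate NMVM distribution. -/
noncomputable def tailmom (μ γ σ : ℝ) (q : ℝ → ℝ) (k : ℕ) (c : ℝ) : ℝ :=
  (surv μ γ σ q c)⁻¹ * ∫ s in Set.Ioi c, s ^ k * mixdens μ γ σ q s


lemma ndens_nonneg (m v x : ℝ) : 0 ≤ ndens m v x := by
  unfold ndens; positivity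

lemma measurable_ndens_joint (μ γ σ : ℝ) :
    Measurable (fun z : ℝ × ℝ => ndens (μ + z.2 * γ) (z.2 * σ ^ 2) z.1) := by
  unfold ndens
  apply Measurable.mul
  · exact (Real.continuous_sqrt.measurable.comp
      ((measurable_snd.mul_const _).const_mul _)).inv
  · exact Real.measurable_exp.comp
      ((((measurable_fst.sub ((measurable_snd.mul_const _).const_add _)).pow_const _).neg).div
        ((measurable_snd.mul_const _).const_mul _))

lemma measurable_ndens_x (m v : ℝ) : Measurable (ndens m v) := by
  unfold ndens
  exact (Real.measurable_exp.comp
    ((((measurable_id.sub_const _).pow_const _).neg).div_const _)).const_mul _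

lemma ndens_eq_gauss (m : ℝ) {v : ℝ} (hv : 0 ≤ v) :
    ndens m v = ProbabilityTheory.gaussianPDFReal m v.toNNReal := by
  ext x
  rw [ProbabilityTheory.gaussianPDFReal, ndens, Real.coe_toNNReal v hv]

lemma integral_ndens (m : ℝ) {v : ℝ} (hv : 0 < v) : ∫ x, ndens m v x = 1 := by
  rw [ndens_eq_gauss m hv.le]
  exact ProbabilityTheory.integral_gaussianPDFReal_eq_one m
    (by simp [Real.toNNReal_eq_zero, not_le, hv])

lemma integrable_ndens (m : ℝ) (v : ℝ) : Integrable (ndens m v) := by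
  rcases le_or_gt v 0 with hv | hv
  · rcases eq_or_lt_of_le hv with h | h
    · rw [ndens_eq_gauss m h.ge]
      exact ProbabilityTheory.integrable_gaussianPDFReal _ _
    · have : ndens m v = fun _ => 0 := by
        ext x
        unfold ndens
        have : Real.sqrt (2 * Real.pi * v) = 0 :=
          Real.sqrt_eq_zero_of_nonpos (by nlinarith [Real.pi_pos])
        simp [this]
      rw [this]; exact integrable_zero _ _ _
  · rw [ndens_eq_gauss m hv.le]
    exact ProbabilityTheory.integrable_gaussianPDFReal _ _

lemma lintegral_ndens_le (m : ℝ) {v : ℝ} (hv : 0 < v) (s : Set ℝ) :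
    ∫⁻ x in s, ENNReal.ofReal (ndens m v x) ≤ 1 := by
  calc ∫⁻ x in s, ENNReal.ofReal (ndens m v x)
      ≤ ∫⁻ x, ENNReal.ofReal (ndens m v x) := setLIntegral_le_lintegral _ _
    _ = ENNReal.ofReal (∫ x, ndens m v x) :=
        (ofReal_integral_eq_lintegral_ofReal (integrable_ndens m v)
          (Eventually.of_forall (ndens_nonneg m v))).symm
    _ = 1 := by rw [integral_ndens m hv]; simp

lemma ndens_abs_bound (m : ℝ) {v : ℝ} (hv : 0 < v) (j : ℕ) (x : ℝ) :
    |x| ^ j * ndens m v x ≤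
      (j.factorial * (Real.sqrt (2 * Real.pi * v))⁻¹ * Real.exp ((v + |m|) ^ 2 / v)) *
        Real.exp (-(4 * v)⁻¹ * x ^ 2) := by
  have h1 : |x| ^ j ≤ j.factorial * Real.exp |x| := by
    have h := Real.pow_div_factorial_le_exp _ (abs_nonneg x) j
    rw [div_le_iff₀ (by positivity)] at h
    linarith
  have key : |x| + -(x - m) ^ 2 / (2 * v) ≤ (v + |m|) ^ 2 / v + -(4 * v)⁻¹ * x ^ 2 := by
    rw [← sub_nonneg]
    have expand : (v + |m|) ^ 2 / v + -(4 * v)⁻¹ * x ^ 2 - (|x| + -(x - m) ^ 2 / (2 * v))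
        = (4 * (v + |m|) ^ 2 - x ^ 2 - 4 * v * |x| + 2 * (x - m) ^ 2) / (4 * v) := by
      field_simp
      ring
    rw [expand]
    apply div_nonneg _ (by positivity)
    have e2 : m * x ≤ |m| * |x| := by rw [← abs_mul]; exact le_abs_self _
    nlinarith [sq_nonneg (|x| - 2 * (v + |m|)), sq_abs x, abs_nonneg x, abs_nonneg m,
      sq_nonneg m]
  unfold ndens
  set c := (Real.sqrt (2 * Real.pi * v))⁻¹ with hc
  have hc0 : 0 ≤ c := by positivity
  calc |x| ^ j * (c * Real.exp (-(x - m) ^ 2 / (2 * v)))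
      ≤ (j.factorial * Real.exp |x|) * (c * Real.exp (-(x - m) ^ 2 / (2 * v))) := by
        apply mul_le_mul_of_nonneg_right h1 (by positivity)
    _ = (j.factorial * c) * Real.exp (|x| + -(x - m) ^ 2 / (2 * v)) := by
        rw [Real.exp_add]; ring
    _ ≤ (j.factorial * c) * Real.exp ((v + |m|) ^ 2 / v + -(4 * v)⁻¹ * x ^ 2) := by
        apply mul_le_mul_of_nonneg_left (Real.exp_le_exp.mpr key) (by positivity)
    _ = _ := by rw [Real.exp_add]; ring

lemma integrable_abs_pow_ndens (m : ℝ) {v : ℝ} (hv : 0 < v) (j : ℕ) :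
    Integrable (fun x => |x| ^ j * ndens m v x) := by
  apply Integrable.mono' ((integrable_exp_neg_mul_sq
      (by positivity : (0:ℝ) < (4 * v)⁻¹)).const_mul
    (j.factorial * (Real.sqrt (2 * Real.pi * v))⁻¹ * Real.exp ((v + |m|) ^ 2 / v)))
  · exact (((measurable_abs.pow_const j).mul (measurable_ndens_x m v)).aestronglyMeasurable)
  · refine Eventually.of_forall fun x => ?_
    rw [Real.norm_of_nonneg (mul_nonneg (by positivity) (ndens_nonneg m v x))]
    exact ndens_abs_bound m hv j x

lemma integrable_pow_ndens (m : ℝ) {v : ℝ} (hv : 0 < v) (j : ℕ) :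
    Integrable (fun x => x ^ j * ndens m v x) := by
  apply (integrable_abs_pow_ndens m hv j).mono'
    (((measurable_id'.pow_const j).mul (measurable_ndens_x m v)).aestronglyMeasurable)
  refine Eventually.of_forall fun x => ?_
  show ‖x ^ j * ndens m v x‖ ≤ _
  rw [Real.norm_eq_abs, abs_mul, abs_of_nonneg (ndens_nonneg m v x), abs_pow]

lemma tendsto_pow_ndens (m : ℝ) {v : ℝ} (hv : 0 < v) (j : ℕ) :
    Tendsto (fun x => x ^ j * ndens m v x) atTop (nhds 0) := by
  apply squeeze_zero' (g := fun x => (Real.sqrt (2 * Real.pi * v))⁻¹ * (x ^ j * Real.exp (-x)))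
  · filter_upwards [eventually_ge_atTop (0:ℝ)] with x hx
    exact mul_nonneg (pow_nonneg hx j) (ndens_nonneg m v x)
  · filter_upwards [eventually_ge_atTop (max (2 * |m|) (8 * v))] with x hx
    have h1 : 2 * |m| ≤ x := le_of_max_le_left hx
    have h2 : 8 * v ≤ x := le_of_max_le_right hx
    have hm : -|m| ≤ m := neg_abs_le m
    have hm2 : m ≤ |m| := le_abs_self m
    have hxpos : 0 ≤ x := le_trans (by positivity) h2
    have hexp : Real.exp (-(x - m) ^ 2 / (2 * v)) ≤ Real.exp (-x) := by
      apply Real.exp_le_exp.mpr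
      rw [div_le_iff₀ (by positivity)]
      nlinarith [abs_nonneg m]
    unfold ndens
    calc x ^ j * ((Real.sqrt (2 * Real.pi * v))⁻¹ * Real.exp (-(x - m) ^ 2 / (2 * v)))
        ≤ x ^ j * ((Real.sqrt (2 * Real.pi * v))⁻¹ * Real.exp (-x)) := by
          apply mul_le_mul_of_nonneg_left _ (pow_nonneg hxpos j)
          exact mul_le_mul_of_nonneg_left hexp (by positivity)
      _ = (Real.sqrt (2 * Real.pi * v))⁻¹ * (x ^ j * Real.exp (-x)) := by ring
  · have := (tendsto_pow_mul_exp_neg_atTop_nhds_zero j).const_mul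
      ((Real.sqrt (2 * Real.pi * v))⁻¹)
    simpa using this

lemma hasDerivAt_ndens (m : ℝ) {v : ℝ} (hv : 0 < v) (x : ℝ) :
    HasDerivAt (ndens m v) ((m - x) / v * ndens m v x) x := by
  unfold ndens
  have h : HasDerivAt (fun x => -(x - m) ^ 2 / (2 * v)) ((m - x) / v) x := by
    have h1 : HasDerivAt (fun x : ℝ => -(x - m) ^ 2) (-(2 * (x - m))) x := by
      simpa using (((hasDerivAt_id x).sub_const m).fun_pow 2).fun_neg
    have h2 := h1.div_const (2 * v)
    refine h2.congr_deriv ?_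
    field_simp
    ring
  have h3 := (h.exp).const_mul ((Real.sqrt (2 * Real.pi * v))⁻¹)
  refine h3.congr_deriv ?_
  ring

lemma gauss_mom (m a : ℝ) {v : ℝ} (hv : 0 < v) (k : ℕ) (hk : 1 ≤ k) :
    ∫ x in Ioi a, x ^ k * ndens m v x
      = m * (∫ x in Ioi a, x ^ (k - 1) * ndens m v x)
        + v * (a ^ (k - 1) * ndens m v a
          + ((k : ℝ) - 1) * (∫ x in Ioi a, x ^ (k - 2) * ndens m v x)) := by
  have hcast : ((k - 1 : ℕ) : ℝ) = (k : ℝ) - 1 := by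
    rw [Nat.cast_sub hk, Nat.cast_one]
  have hexp : k - 1 - 1 = k - 2 := by omega
  -- derivative of u x = x^(k-1) * ndens m v x
  have hderiv : ∀ x : ℝ,
      HasDerivAt (fun x => x ^ (k - 1) * ndens m v x)
        (((k : ℝ) - 1) * x ^ (k - 2) * ndens m v x
          + x ^ (k - 1) * ((m - x) / v * ndens m v x)) x := by
    intro x
    have h1 : HasDerivAt (fun x : ℝ => x ^ (k - 1))
        (((k : ℝ) - 1) * x ^ (k - 2)) x := by
      have := hasDerivAt_pow (k - 1) x
      rwa [hcast, hexp] at this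
    exact h1.mul (hasDerivAt_ndens m hv x)
  -- integrability of the derivative
  have hint : IntegrableOn (fun x =>
      ((k : ℝ) - 1) * x ^ (k - 2) * ndens m v x
        + x ^ (k - 1) * ((m - x) / v * ndens m v x)) (Ioi a) := by
    have e : (fun x => ((k : ℝ) - 1) * x ^ (k - 2) * ndens m v x
        + x ^ (k - 1) * ((m - x) / v * ndens m v x))
        = fun x => ((k : ℝ) - 1) * (x ^ (k - 2) * ndens m v x)
            + ((m / v) * (x ^ (k - 1) * ndens m v x) - (v⁻¹) * (x ^ k * ndens m v x)) := by
      funext x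
      have hxk : x ^ (k - 1) * x = x ^ k := by
        rw [← pow_succ]
        congr 1
        omega
      field_simp
      ring_nf
      rw [← hxk]
      ring
    rw [e]
    apply Integrable.integrableOn
    exact (((integrable_pow_ndens m hv (k - 2)).const_mul _).add
      (((integrable_pow_ndens m hv (k - 1)).const_mul _).sub
        ((integrable_pow_ndens m hv k).const_mul _)))
  have hibp := integral_Ioi_of_hasDerivAt_of_tendsto'
    (f := fun x => x ^ (k - 1) * ndens m v x)
    (fun x _ => hderiv x) hint (tendsto_pow_ndens m hv (k - 1))
  -- split the integral of the derivative
  have hsplit : ∫ x in Ioi a, (((k : ℝ) - 1) * x ^ (k - 2) * ndens m v x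
        + x ^ (k - 1) * ((m - x) / v * ndens m v x))
      = ((k : ℝ) - 1) * (∫ x in Ioi a, x ^ (k - 2) * ndens m v x)
        + ((m / v) * (∫ x in Ioi a, x ^ (k - 1) * ndens m v x)
          - (v⁻¹) * (∫ x in Ioi a, x ^ k * ndens m v x)) := by
    rw [← integral_const_mul, ← integral_const_mul, ← integral_const_mul, ← integral_sub, ← integral_add]
    · congr 1
      funext x
      have hxk : x ^ (k - 1) * x = x ^ k := by
        rw [← pow_succ]; congr 1; omega
      field_simp
      ring_nf
      rw [← hxk]
      ring
    · exact ((integrable_pow_ndens m hv (k - 2)).const_mul _).integrableOn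
    · exact (((integrable_pow_ndens m hv (k - 1)).const_mul _).sub
        ((integrable_pow_ndens m hv k).const_mul _)).integrableOn
    · exact ((integrable_pow_ndens m hv (k - 1)).const_mul _).integrableOn
    · exact ((integrable_pow_ndens m hv k).const_mul _).integrableOn
  rw [hsplit] at hibp
  have hv' : v ≠ 0 := ne_of_gt hv
  field_simp at hibp ⊢
  linarith [hibp]

lemma mixdens_nonneg (μ γ σ : ℝ) {q : ℝ → ℝ} (hq0 : ∀ θ, 0 ≤ q θ) (s : ℝ) :
    0 ≤ mixdens μ γ σ q s :=
  setIntegral_nonneg measurableSet_Ioi fun θ _ =>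
    mul_nonneg (ndens_nonneg _ _ _) (hq0 θ)

lemma fubini_mix (μ γ σ sα : ℝ) (hσ : 0 < σ) (q : ℝ → ℝ) (hqm : Measurable q)
    (hq0 : ∀ θ, 0 ≤ q θ) (hqint : IntegrableOn q (Ioi 0)) (j : ℕ)
    (hjint : IntegrableOn (fun s => s ^ j * mixdens μ γ σ q s) (Ioi sα)) :
    Integrable (fun z : ℝ × ℝ => z.1 ^ j * (ndens (μ + z.2 * γ) (z.2 * σ ^ 2) z.1 * q z.2))
      ((volume.restrict (Ioi sα)).prod (volume.restrict (Ioi 0))) := by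
  have hNmeas := measurable_ndens_joint μ γ σ
  have hGm : Measurable (fun z : ℝ × ℝ =>
      ndens (μ + z.2 * γ) (z.2 * σ ^ 2) z.1 * q z.2) :=
    hNmeas.mul (hqm.comp measurable_snd)
  have hFmeas : Measurable (fun z : ℝ × ℝ =>
      z.1 ^ j * (ndens (μ + z.2 * γ) (z.2 * σ ^ 2) z.1 * q z.2)) :=
    (measurable_fst.pow_const j).mul hGm
  -- finiteness of the q-lintegral
  have hq_fin : (∫⁻ θ in Ioi 0, ENNReal.ofReal (q θ)) ≠ ⊤ := by
    refine ne_of_lt (lt_of_le_of_lt (lintegral_mono fun θ => ?_) hqint.2)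
    rw [← ofReal_norm_eq_enorm, Real.norm_eq_abs]
    exact ENNReal.ofReal_le_ofReal (le_abs_self _)
  -- swap of lintegrals
  have swap_lin : (∫⁻ s in Ioi sα, ∫⁻ θ in Ioi 0,
        ENNReal.ofReal (ndens (μ + θ * γ) (θ * σ ^ 2) s * q θ))
      = ∫⁻ θ in Ioi 0, ∫⁻ s in Ioi sα,
          ENNReal.ofReal (ndens (μ + θ * γ) (θ * σ ^ 2) s * q θ) :=
    lintegral_lintegral_swap (hGm.ennreal_ofReal.aemeasurable)
  have inner_bound : ∀ θ ∈ Ioi (0:ℝ), (∫⁻ s in Ioi sα,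
      ENNReal.ofReal (ndens (μ + θ * γ) (θ * σ ^ 2) s * q θ)) ≤ ENNReal.ofReal (q θ) := by
    intro θ hθ
    have hv : 0 < θ * σ ^ 2 := by
      have := mem_Ioi.mp hθ; positivity
    calc (∫⁻ s in Ioi sα, ENNReal.ofReal (ndens (μ + θ * γ) (θ * σ ^ 2) s * q θ))
        = ∫⁻ s in Ioi sα,
            ENNReal.ofReal (ndens (μ + θ * γ) (θ * σ ^ 2) s) * ENNReal.ofReal (q θ) := by
          congr 1
          funext s
          rw [ENNReal.ofReal_mul (ndens_nonneg _ _ _)]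
      _ = (∫⁻ s in Ioi sα, ENNReal.ofReal (ndens (μ + θ * γ) (θ * σ ^ 2) s))
            * ENNReal.ofReal (q θ) := lintegral_mul_const' _ _ ENNReal.ofReal_ne_top
      _ ≤ 1 * ENNReal.ofReal (q θ) :=
          mul_le_mul_left (lintegral_ndens_le _ hv _) _
      _ = ENNReal.ofReal (q θ) := one_mul _
  have total : (∫⁻ s in Ioi sα, ∫⁻ θ in Ioi 0,
      ENNReal.ofReal (ndens (μ + θ * γ) (θ * σ ^ 2) s * q θ)) ≠ ⊤ := by
    rw [swap_lin]
    refine ne_of_lt (lt_of_le_of_lt ?_ hq_fin.lt_top)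
    apply lintegral_mono_ae
    filter_upwards [ae_restrict_mem measurableSet_Ioi] with θ hθ
    exact inner_bound θ hθ
  -- a.e. s, integrability in θ
  have aeA : ∀ᵐ s ∂(volume.restrict (Ioi sα)),
      Integrable (fun θ => ndens (μ + θ * γ) (θ * σ ^ 2) s * q θ)
        (volume.restrict (Ioi 0)) := by
    have hmeasG : Measurable fun s => ∫⁻ θ in Ioi 0,
        ENNReal.ofReal (ndens (μ + θ * γ) (θ * σ ^ 2) s * q θ) := by
      exact Measurable.lintegral_prod_right'
        (f := fun z : ℝ × ℝ => ENNReal.ofReal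
          (ndens (μ + z.2 * γ) (z.2 * σ ^ 2) z.1 * q z.2))
        (ν := volume.restrict (Ioi 0)) hGm.ennreal_ofReal
    filter_upwards [ae_lt_top hmeasG total] with s hs
    refine ⟨(Measurable.aestronglyMeasurable ?_), ?_⟩
    · have h := hGm.comp (measurable_prodMk_left (x := s))
      exact h
    · rw [hasFiniteIntegral_iff_ofReal (Eventually.of_forall fun θ =>
        mul_nonneg (ndens_nonneg _ _ _) (hq0 θ))]
      exact hs
  rw [integrable_prod_iff hFmeas.aestronglyMeasurable]
  constructor
  · filter_upwards [aeA] with s hA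
    exact hA.const_mul _
  · have hfun : (fun s => ∫ θ in Ioi 0,
        ‖s ^ j * (ndens (μ + θ * γ) (θ * σ ^ 2) s * q θ)‖)
        = fun s => |s ^ j * mixdens μ γ σ q s| := by
      funext s
      have h1 : ∀ θ : ℝ, ‖s ^ j * (ndens (μ + θ * γ) (θ * σ ^ 2) s * q θ)‖
          = |s ^ j| * (ndens (μ + θ * γ) (θ * σ ^ 2) s * q θ) := fun θ => by
        rw [Real.norm_eq_abs, abs_mul,
          abs_of_nonneg (mul_nonneg (ndens_nonneg _ _ _) (hq0 θ))]
      simp only [h1]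
      rw [integral_const_mul, abs_mul,
        abs_of_nonneg (mixdens_nonneg μ γ σ hq0 s)]
      rfl
    rw [hfun]
    exact hjint.abs

lemma swap_mix (μ γ σ sα : ℝ) (hσ : 0 < σ) (q : ℝ → ℝ) (hqm : Measurable q)
    (hq0 : ∀ θ, 0 ≤ q θ) (hqint : IntegrableOn q (Ioi 0)) (j : ℕ)
    (hjint : IntegrableOn (fun s => s ^ j * mixdens μ γ σ q s) (Ioi sα)) :
    (∫ s in Ioi sα, s ^ j * mixdens μ γ σ q s)
      = ∫ θ in Ioi 0, q θ * ∫ s in Ioi sα, s ^ j * ndens (μ + θ * γ) (θ * σ ^ 2) s := by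
  have hF := fubini_mix μ γ σ sα hσ q hqm hq0 hqint j hjint
  have h1 : (∫ s in Ioi sα, s ^ j * mixdens μ γ σ q s)
      = ∫ s in Ioi sα, ∫ θ in Ioi 0,
          s ^ j * (ndens (μ + θ * γ) (θ * σ ^ 2) s * q θ) := by
    congr 1
    funext s
    rw [integral_const_mul]
    rfl
  rw [h1, integral_integral_swap hF]
  congr 1
  funext θ
  have e : ∀ x : ℝ, x ^ j * (ndens (μ + θ * γ) (θ * σ ^ 2) x * q θ)
      = (x ^ j * ndens (μ + θ * γ) (θ * σ ^ 2) x) * q θ := fun x => by ring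
  simp only [e]
  rw [integral_mul_const, mul_comm]

lemma int_q_mom (μ γ σ sα : ℝ) (hσ : 0 < σ) (q : ℝ → ℝ) (hqm : Measurable q)
    (hq0 : ∀ θ, 0 ≤ q θ) (hqint : IntegrableOn q (Ioi 0)) (j : ℕ)
    (hjint : IntegrableOn (fun s => s ^ j * mixdens μ γ σ q s) (Ioi sα)) :
    IntegrableOn (fun θ => q θ * ∫ s in Ioi sα, s ^ j * ndens (μ + θ * γ) (θ * σ ^ 2) s)
      (Ioi 0) := by
  have hF := fubini_mix μ γ σ sα hσ q hqm hq0 hqint j hjint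
  have := hF.integral_prod_right
  refine this.congr (Eventually.of_forall fun θ => ?_)
  have e : ∀ x : ℝ, x ^ j * (ndens (μ + θ * γ) (θ * σ ^ 2) x * q θ)
      = (x ^ j * ndens (μ + θ * γ) (θ * σ ^ 2) x) * q θ := fun x => by ring
  simp only [e]
  rw [integral_mul_const, mul_comm]

/-- recursion for the tail moments of a univariate NMVM random variable. -/
theorem nmvm_tail_moment_recursion
    (μ γ σ α sα : ℝ) (hσ : 0 < σ) (p : ℝ → ℝ)
    (hp0 : ∀ θ, 0 ≤ p θ) (hp1 : ∫ θ in Set.Ioi (0:ℝ), p θ = 1)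
    (k : ℕ) (hk : 1 ≤ k)
    (cstar : ℝ) (hcstar : cstar = ∫ θ in Set.Ioi (0:ℝ), θ * p θ) (hcpos : 0 < cstar)
    (pstar : ℝ → ℝ) (hpstar : pstar = fun θ => θ * p θ / cstar)
    (hα01 : α ∈ Set.Ioo (0:ℝ) 1)
    (hquant : surv μ γ σ p sα = 1 - α)
    (αstar : ℝ) (hαstar : αstar = 1 - surv μ γ σ pstar sα)
    (hspos : 0 < surv μ γ σ pstar sα)
    (hintp : ∀ j ≤ k, IntegrableOn (fun s => s ^ j * mixdens μ γ σ p s) (Set.Ioi sα))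
    (hintps : ∀ j ≤ k, IntegrableOn (fun s => s ^ j * mixdens μ γ σ pstar s) (Set.Ioi sα)) :
    tailmom μ γ σ p k sα
      = μ * tailmom μ γ σ p (k - 1) sα
        + cstar * (1 - αstar) / (1 - α) *
          (σ ^ 2 * sα ^ (k - 1) * (mixdens μ γ σ pstar sα / surv μ γ σ pstar sα)
            + γ * tailmom μ γ σ pstar (k - 1) sα
            + ((k : ℝ) - 1) * σ ^ 2 * tailmom μ γ σ pstar (k - 2) sα) := by
  -- basic integrability of p and θ·p on (0,∞)
  have hp_int : IntegrableOn p (Ioi 0) := by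
    by_contra h
    rw [integral_undef h] at hp1
    norm_num at hp1
  have htp_int : IntegrableOn (fun θ => θ * p θ) (Ioi 0) := by
    by_contra h
    rw [integral_undef h] at hcstar
    rw [hcstar] at hcpos
    norm_num at hcpos
  -- measurable nonnegative representatives
  set p' : ℝ → ℝ := fun θ => |hp_int.1.mk p θ| with hp'def
  have hp'm : Measurable p' := hp_int.1.stronglyMeasurable_mk.measurable.abs
  have hp'0 : ∀ θ, 0 ≤ p' θ := fun θ => abs_nonneg _
  have hpe : p =ᵐ[volume.restrict (Ioi 0)] p' := by
    filter_upwards [hp_int.1.ae_eq_mk] with θ hθ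
    show p θ = |hp_int.1.mk p θ|
    rw [← hθ, abs_of_nonneg (hp0 θ)]
  set tp' : ℝ → ℝ := fun θ => |θ| * p' θ with htp'def
  have htp'm : Measurable tp' := measurable_abs.mul hp'm
  have htp'0 : ∀ θ, 0 ≤ tp' θ := fun θ => mul_nonneg (abs_nonneg θ) (hp'0 θ)
  have htpe : (fun θ => θ * p θ) =ᵐ[volume.restrict (Ioi 0)] tp' := by
    filter_upwards [hpe, ae_restrict_mem measurableSet_Ioi] with θ h1 h2
    show θ * p θ = |θ| * p' θ
    rw [← h1, abs_of_pos h2]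
  have hp'int : IntegrableOn p' (Ioi 0) := hp_int.congr hpe
  have htp'int : IntegrableOn tp' (Ioi 0) := htp_int.congr htpe
  -- mixdens identifications
  have hmixp : mixdens μ γ σ p = mixdens μ γ σ p' := by
    funext s
    exact integral_congr_ae (by filter_upwards [hpe] with θ h; rw [h])
  have hmixps : ∀ s, mixdens μ γ σ pstar s = mixdens μ γ σ tp' s / cstar := by
    intro s
    rw [hpstar]
    unfold mixdens
    rw [← integral_div]
    refine integral_congr_ae ?_
    filter_upwards [htpe] with θ h
    rw [← h]
    ring
  have hmixtp : ∀ s, mixdens μ γ σ tp' s = cstar * mixdens μ γ σ pstar s := by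
    intro s
    rw [hmixps s]
    field_simp
  -- transferred integrability hypotheses
  have hintp' : ∀ j, j ≤ k → IntegrableOn (fun s => s ^ j * mixdens μ γ σ p' s) (Ioi sα) := by
    intro j hj
    have h := hintp j hj
    rwa [hmixp] at h
  have hinttp' : ∀ j, j ≤ k →
      IntegrableOn (fun s => s ^ j * mixdens μ γ σ tp' s) (Ioi sα) := by
    intro j hj
    have h2 : (fun s => s ^ j * mixdens μ γ σ tp' s)
        = fun s => cstar * (s ^ j * mixdens μ γ σ pstar s) := by
      funext s
      rw [hmixtp s]
      ring
    rw [h2]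
    exact (hintps j hj).const_mul cstar
  have hv : ∀ θ : ℝ, θ ∈ Ioi (0:ℝ) → 0 < θ * σ ^ 2 :=
    fun θ hθ => mul_pos hθ (pow_pos hσ 2)
  set A : ℕ → ℝ → ℝ :=
    fun j θ => ∫ s in Ioi sα, s ^ j * ndens (μ + θ * γ) (θ * σ ^ 2) s with hA
  have hndm : Measurable (fun θ : ℝ => ndens (μ + θ * γ) (θ * σ ^ 2) sα) := by
    have h := (measurable_ndens_joint μ γ σ).comp (measurable_prodMk_left (x := sα))
    exact h
  -- integrability of the boundary term
  have T3 : IntegrableOn (fun θ => tp' θ * ndens (μ + θ * γ) (θ * σ ^ 2) sα) (Ioi 0) := by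
    refine Integrable.mono' ((hp'int.add htp'int).const_mul
      ((Real.sqrt (2 * Real.pi * σ ^ 2))⁻¹)) ((htp'm.mul hndm).aestronglyMeasurable) ?_
    filter_upwards [ae_restrict_mem measurableSet_Ioi] with θ hθ
    have hθ0 : (0:ℝ) < θ := hθ
    have hc' : (0:ℝ) < Real.sqrt (2 * Real.pi * σ ^ 2) := by
      apply Real.sqrt_pos.mpr
      have := Real.pi_pos
      positivity
    have hnd_le : ndens (μ + θ * γ) (θ * σ ^ 2) sα
        ≤ (Real.sqrt (2 * Real.pi * (θ * σ ^ 2)))⁻¹ := by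
      unfold ndens
      have h1 : Real.exp (-(sα - (μ + θ * γ)) ^ 2 / (2 * (θ * σ ^ 2))) ≤ 1 := by
        apply Real.exp_le_one_iff.mpr
        apply div_nonpos_of_nonpos_of_nonneg (neg_nonpos.mpr (sq_nonneg _))
        have h2 := hθ0
        positivity
      exact mul_le_of_le_one_right (inv_nonneg.mpr (Real.sqrt_nonneg _)) h1
    have hsqrt : Real.sqrt (2 * Real.pi * (θ * σ ^ 2))
        = Real.sqrt θ * Real.sqrt (2 * Real.pi * σ ^ 2) := by
      rw [show 2 * Real.pi * (θ * σ ^ 2) = θ * (2 * Real.pi * σ ^ 2) by ring,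
        Real.sqrt_mul hθ0.le]
    have htpv : tp' θ = θ * p' θ := by
      show |θ| * p' θ = θ * p' θ
      rw [abs_of_pos hθ0]
    have hsθ : Real.sqrt θ ≤ 1 + θ := by
      nlinarith [Real.sq_sqrt hθ0.le, Real.sqrt_nonneg θ, sq_nonneg (Real.sqrt θ - 1)]
    calc ‖tp' θ * ndens (μ + θ * γ) (θ * σ ^ 2) sα‖
        = tp' θ * ndens (μ + θ * γ) (θ * σ ^ 2) sα := by
          rw [Real.norm_of_nonneg (mul_nonneg (htp'0 θ) (ndens_nonneg _ _ _))]
      _ ≤ tp' θ * (Real.sqrt (2 * Real.pi * (θ * σ ^ 2)))⁻¹ :=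
          mul_le_mul_of_nonneg_left hnd_le (htp'0 θ)
      _ = Real.sqrt θ * (Real.sqrt (2 * Real.pi * σ ^ 2))⁻¹ * p' θ := by
          rw [htpv, hsqrt, mul_inv]
          rw [show θ * p' θ * ((Real.sqrt θ)⁻¹ * (Real.sqrt (2 * Real.pi * σ ^ 2))⁻¹)
              = (θ / Real.sqrt θ) * (Real.sqrt (2 * Real.pi * σ ^ 2))⁻¹ * p' θ by
            rw [div_eq_mul_inv]; ring]
          rw [Real.div_sqrt]
      _ ≤ (1 + θ) * (Real.sqrt (2 * Real.pi * σ ^ 2))⁻¹ * p' θ := by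
          apply mul_le_mul_of_nonneg_right _ (hp'0 θ)
          exact mul_le_mul_of_nonneg_right hsθ (inv_nonneg.mpr hc'.le)
      _ = (Real.sqrt (2 * Real.pi * σ ^ 2))⁻¹ * (p' θ + tp' θ) := by
          rw [htpv]; ring
  -- integrability of the moment terms
  have T1 : IntegrableOn (fun θ => p' θ * A (k - 1) θ) (Ioi 0) := by
    simp only [hA]
    exact int_q_mom μ γ σ sα hσ p' hp'm hp'0 hp'int (k - 1) (hintp' (k - 1) (by omega))
  have T2 : IntegrableOn (fun θ => tp' θ * A (k - 1) θ) (Ioi 0) := by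
    simp only [hA]
    exact int_q_mom μ γ σ sα hσ tp' htp'm htp'0 htp'int (k - 1) (hinttp' (k - 1) (by omega))
  have T4 : IntegrableOn (fun θ => tp' θ * A (k - 2) θ) (Ioi 0) := by
    simp only [hA]
    exact int_q_mom μ γ σ sα hσ tp' htp'm htp'0 htp'int (k - 2) (hinttp' (k - 2) (by omega))
  -- step 1: the k-th moment as a θ-integral
  have e1 : (∫ s in Ioi sα, s ^ k * mixdens μ γ σ p s) = ∫ θ in Ioi 0, p' θ * A k θ := by
    rw [hmixp]
    simp only [hA]
    exact swap_mix μ γ σ sα hσ p' hp'm hp'0 hp'int k (hintp' k le_rfl)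
  -- step 2: pointwise expansion
  have e2 : (∫ θ in Ioi 0, p' θ * A k θ)
      = ∫ θ in Ioi 0, (μ * (p' θ * A (k - 1) θ) + γ * (tp' θ * A (k - 1) θ)
          + σ ^ 2 * sα ^ (k - 1) * (tp' θ * ndens (μ + θ * γ) (θ * σ ^ 2) sα)
          + ((k : ℝ) - 1) * σ ^ 2 * (tp' θ * A (k - 2) θ)) := by
    refine integral_congr_ae ?_
    filter_upwards [ae_restrict_mem measurableSet_Ioi] with θ hθ
    have hgm := gauss_mom (μ + θ * γ) sα (hv θ hθ) k hk
    have htpv : tp' θ = θ * p' θ := by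
      show |θ| * p' θ = θ * p' θ
      rw [abs_of_pos hθ]
    simp only [hA]
    rw [hgm, htpv]
    ring
  -- step 3: split the integral
  have e3 : (∫ θ in Ioi 0, (μ * (p' θ * A (k - 1) θ) + γ * (tp' θ * A (k - 1) θ)
          + σ ^ 2 * sα ^ (k - 1) * (tp' θ * ndens (μ + θ * γ) (θ * σ ^ 2) sα)
          + ((k : ℝ) - 1) * σ ^ 2 * (tp' θ * A (k - 2) θ)))
      = μ * (∫ θ in Ioi 0, p' θ * A (k - 1) θ)
        + γ * (∫ θ in Ioi 0, tp' θ * A (k - 1) θ)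
        + σ ^ 2 * sα ^ (k - 1) * (∫ θ in Ioi 0, tp' θ * ndens (μ + θ * γ) (θ * σ ^ 2) sα)
        + ((k : ℝ) - 1) * σ ^ 2 * (∫ θ in Ioi 0, tp' θ * A (k - 2) θ) := by
    have I1 : Integrable (fun θ => μ * (p' θ * A (k - 1) θ)) (volume.restrict (Ioi 0)) :=
      T1.const_mul μ
    have I2 : Integrable (fun θ => γ * (tp' θ * A (k - 1) θ)) (volume.restrict (Ioi 0)) :=
      T2.const_mul γ
    have I3 : Integrable (fun θ => σ ^ 2 * sα ^ (k - 1)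
        * (tp' θ * ndens (μ + θ * γ) (θ * σ ^ 2) sα)) (volume.restrict (Ioi 0)) :=
      T3.const_mul _
    have I4 : Integrable (fun θ => ((k : ℝ) - 1) * σ ^ 2 * (tp' θ * A (k - 2) θ))
        (volume.restrict (Ioi 0)) := T4.const_mul _
    have I12 : Integrable (fun θ => μ * (p' θ * A (k - 1) θ)
        + γ * (tp' θ * A (k - 1) θ)) (volume.restrict (Ioi 0)) := I1.add I2
    have I123 : Integrable (fun θ => μ * (p' θ * A (k - 1) θ) + γ * (tp' θ * A (k - 1) θ)
        + σ ^ 2 * sα ^ (k - 1) * (tp' θ * ndens (μ + θ * γ) (θ * σ ^ 2) sα))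
        (volume.restrict (Ioi 0)) := I12.add I3
    rw [integral_add I123 I4, integral_add I12 I3, integral_add I1 I2,
      integral_const_mul, integral_const_mul, integral_const_mul, integral_const_mul]
  -- step 4: convert back
  have b1 : (∫ θ in Ioi 0, p' θ * A (k - 1) θ)
      = ∫ s in Ioi sα, s ^ (k - 1) * mixdens μ γ σ p s := by
    rw [hmixp]
    simp only [hA]
    exact (swap_mix μ γ σ sα hσ p' hp'm hp'0 hp'int (k - 1) (hintp' (k - 1) (by omega))).symm
  have b2 : ∀ j, j ≤ k → (∫ θ in Ioi 0, tp' θ * A j θ)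
      = cstar * ∫ s in Ioi sα, s ^ j * mixdens μ γ σ pstar s := by
    intro j hj
    have hswap := swap_mix μ γ σ sα hσ tp' htp'm htp'0 htp'int j (hinttp' j hj)
    simp only [hA]
    rw [← hswap]
    have hpt : ∀ s : ℝ, s ^ j * mixdens μ γ σ tp' s
        = cstar * (s ^ j * mixdens μ γ σ pstar s) := fun s => by
      rw [hmixtp s]; ring
    simp only [hpt]
    rw [integral_const_mul]
  have b3 : (∫ θ in Ioi 0, tp' θ * ndens (μ + θ * γ) (θ * σ ^ 2) sα)
      = cstar * mixdens μ γ σ pstar sα := by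
    have h1 : (∫ θ in Ioi 0, tp' θ * ndens (μ + θ * γ) (θ * σ ^ 2) sα)
        = mixdens μ γ σ tp' sα := by
      unfold mixdens
      refine integral_congr_ae (Eventually.of_forall fun θ => mul_comm _ _)
    rw [h1, hmixtp sα]
  -- key identity
  have key : (∫ s in Ioi sα, s ^ k * mixdens μ γ σ p s)
      = μ * (∫ s in Ioi sα, s ^ (k - 1) * mixdens μ γ σ p s)
        + cstar * (σ ^ 2 * sα ^ (k - 1) * mixdens μ γ σ pstar sα
          + γ * (∫ s in Ioi sα, s ^ (k - 1) * mixdens μ γ σ pstar s)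
          + ((k : ℝ) - 1) * σ ^ 2 * (∫ s in Ioi sα, s ^ (k - 2) * mixdens μ γ σ pstar s)) := by
    rw [e1, e2, e3, b1, b2 (k - 1) (by omega), b2 (k - 2) (by omega), b3]
    ring
  -- final algebra
  have h1α : (0:ℝ) < 1 - α := by
    have := hα01.2
    linarith
  have hS2 : surv μ γ σ pstar sα ≠ 0 := ne_of_gt hspos
  have h1αn : (1:ℝ) - α ≠ 0 := ne_of_gt h1α
  simp only [tailmom]
  rw [key, hquant, hαstar]
  field_simp
  ring
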